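/- There exists a real Banach space X and a point x ∈ S_X such that Δc(x) = 2 and Dc(x) = 0. -/

import Mathlib

open Set Metric Filter
open scoped ENNReal NNReal
set_option synthInstance.maxHeartbeats 1000000
set_option maxHeartbeats 1000000



variable {X : Type*} [NormedAddCommGroup X] [NormedSpace ℝ X]

/-- The slice `S(f, δ)` of the closed unit ball of `X`, determined by a norm-one functional
`f` and `δ > 0` (the norm and positivity conditions are imposed at use sites). -/
def unitBallSlice (f : X →L[ℝ] ℝ) (δ : ℝ) : Set X :=
  {y | ‖y‖ ≤ 1 ∧ 1 - δ < f y}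

/-- The Daugavet constant of a point: the infimum over all slices of the unit ball of the
supremum of distances from `x` to points of the slice. -/
noncomputable def Dc (x : X) : ℝ :=
  sInf {r | ∃ (f : X →L[ℝ] ℝ) (δ : ℝ), ‖f‖ = 1 ∧ 0 < δ ∧
    r = sSup ((fun y => ‖x - y‖) '' unitBallSlice f δ)}

/-- The Δ-constant of a point: the infimum over all slices of the unit ball containing `x`
of the supremum of distances from `x` to points of the slice. -/
noncomputable def DeltaC (x : X) : ℝ :=
  sInf {r | ∃ (f : X →L[ℝ] ℝ) (δ : ℝ), ‖f‖ = 1 ∧ 0 < δ ∧ x ∈ unitBallSlice f δ ∧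
    r = sSup ((fun y => ‖x - y‖) '' unitBallSlice f δ)}


noncomputable section DPoint


namespace DPoint

abbrev E := lp (fun _ : ℕ => ℝ) ∞

lemma memE (f : ℕ → ℝ) (C : ℝ) (h : ∀ n, |f n| ≤ C) : Memℓp f ∞ := by
  apply memℓp_infty
  refine ⟨C, ?_⟩
  rintro a ⟨n, rfl⟩
  simpa using h n

def oneE : E := ⟨fun _ => 1, memE _ 1 (by norm_num)⟩

@[simp] lemma oneE_apply (n : ℕ) : (oneE : ℕ → ℝ) n = 1 := rfl

def eE (k : ℕ) : E := lp.single ∞ k 1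

lemma eE_apply_self (k : ℕ) : (eE k : ℕ → ℝ) k = 1 := lp.single_apply_self ∞ k 1

lemma eE_apply_ne (k : ℕ) {j : ℕ} (h : j ≠ k) : (eE k : ℕ → ℝ) j = 0 :=
  lp.single_apply_ne ∞ k 1 h

def tk (k : ℕ) : ℝ := 1 / (k + 1)

lemma tk_pos (k : ℕ) : 0 < tk k := by unfold tk; positivity

lemma tk_le_one (k : ℕ) : tk k ≤ 1 := by
  rw [tk, div_le_one (by positivity)]
  norm_num

def vE (k : ℕ) : E := oneE + tk k • eE k

lemma vE_apply (k j : ℕ) : (vE k : ℕ → ℝ) j = 1 + (if j = k then tk k else 0) := by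
  have : (vE k : ℕ → ℝ) j = (oneE : ℕ → ℝ) j + tk k * (eE k : ℕ → ℝ) j := by
    simp [vE, lp.coeFn_add, lp.coeFn_smul]; rfl
  rw [this, oneE_apply]
  by_cases h : j = k
  · subst h; rw [eE_apply_self, if_pos rfl]; ring
  · rw [eE_apply_ne _ h, if_neg h]; ring

/-- Upper bound for the sup norm from coordinatewise bounds. -/
lemma normE_le (z : E) (C : ℝ) (hC : 0 ≤ C) (h : ∀ n, |(z : ℕ → ℝ) n| ≤ C) : ‖z‖ ≤ C :=
  lp.norm_le_of_forall_le hC (by simpa using h)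

lemma abs_apply_le_normE (z : E) (n : ℕ) : |(z : ℕ → ℝ) n| ≤ ‖z‖ := by
  simpa using lp.norm_apply_le_norm (ENNReal.top_ne_zero) z n

/-- The generating set of the new unit ball. -/
def gens : Set E := Metric.closedBall 0 1 ∪ Set.range vE ∪ Set.range (fun k => -vE k)

/-- The new unit ball. -/
def Bset : Set E := closure (convexHull ℝ gens)

lemma ball_subset_gens : Metric.closedBall (0 : E) 1 ⊆ gens := fun z hz =>
  Or.inl (Or.inl hz)

lemma vE_mem_gens (k : ℕ) : vE k ∈ gens := Or.inl (Or.inr ⟨k, rfl⟩)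

lemma neg_vE_mem_gens (k : ℕ) : -vE k ∈ gens := Or.inr ⟨k, rfl⟩

lemma gens_subset_Bset : gens ⊆ Bset :=
  (subset_convexHull ℝ gens).trans subset_closure

lemma Bset_convex : Convex ℝ Bset := (convex_convexHull ℝ gens).closure

lemma Bset_closed : IsClosed Bset := isClosed_closure

lemma norm_le_one_mem_Bset {z : E} (h : ‖z‖ ≤ 1) : z ∈ Bset :=
  gens_subset_Bset (ball_subset_gens (by simpa using h))

lemma zero_mem_Bset : (0 : E) ∈ Bset := norm_le_one_mem_Bset (by simp)

lemma Bset_absorbent : Absorbent ℝ Bset := by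
  have h1 : Absorbent ℝ (Metric.ball (0 : E) 1) := absorbent_ball_zero one_pos
  exact h1.mono ((Metric.ball_subset_closedBall).trans
    (ball_subset_gens.trans gens_subset_Bset))

lemma gens_symm : ∀ z ∈ gens, -z ∈ gens := by
  rintro z ((h | ⟨k, rfl⟩) | ⟨k, rfl⟩)
  · refine Or.inl (Or.inl ?_)
    simpa [Metric.mem_closedBall, dist_eq_norm] using
      (by simpa [Metric.mem_closedBall, dist_eq_norm] using h : ‖z‖ ≤ 1)
  · exact Or.inr ⟨k, rfl⟩
  · exact Or.inl (Or.inr ⟨k, by simp⟩)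


lemma neg_gens : -gens = gens := by
  ext z
  constructor
  · intro hz
    have := gens_symm (-z) (by simpa [Set.mem_neg] using hz)
    simpa using this
  · intro hz
    simpa [Set.mem_neg] using gens_symm z hz

lemma Bset_symm {z : E} (hz : z ∈ Bset) : -z ∈ Bset := by
  have h1 : -z ∈ (fun w : E => -w) '' (closure (convexHull ℝ gens)) := ⟨z, hz, rfl⟩
  have h2 : (fun w : E => -w) '' (closure (convexHull ℝ gens)) ⊆
      closure ((fun w : E => -w) '' (convexHull ℝ gens)) :=
    image_closure_subset_closure_image continuous_neg
  have h3 : (fun w : E => -w) '' (convexHull ℝ gens) = convexHull ℝ gens := by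
    rw [Set.image_neg_eq_neg, ← convexHull_neg, neg_gens]
  rw [Bset]
  rw [h3] at h2
  exact h2 h1

def N : E → ℝ := gauge Bset

lemma N_nonneg (z : E) : 0 ≤ N z := gauge_nonneg z

lemma N_zero : N 0 = 0 := gauge_zero

lemma N_add_le (a b : E) : N (a + b) ≤ N a + N b :=
  gauge_add_le Bset_convex Bset_absorbent a b

lemma N_neg (z : E) : N (-z) = N z := gauge_neg (fun _ h => Bset_symm h) z

lemma N_smul (a : ℝ) (z : E) : N (a • z) = |a| * N z := by
  show gauge Bset (a • z) = |a| * gauge Bset z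
  rcases le_or_gt 0 a with ha | ha
  · rw [gauge_smul_of_nonneg ha, abs_of_nonneg ha]; rfl
  · have h : a • z = -((-a) • z) := by rw [neg_smul, neg_neg]
    rw [h, gauge_neg (fun _ hh => Bset_symm hh), gauge_smul_of_nonneg (by linarith : (0:ℝ) ≤ -a),
      abs_of_neg ha]; rfl

lemma N_le_norm (z : E) : N z ≤ ‖z‖ := by
  have h1 : Metric.ball (0 : E) 1 ⊆ Bset :=
    Metric.ball_subset_closedBall.trans (ball_subset_gens.trans gens_subset_Bset)
  have := gauge_mono (absorbent_ball_zero one_pos) h1 z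
  rwa [gauge_ball zero_le_one, div_one] at this

lemma N_le_one_of_mem {z : E} (hz : z ∈ Bset) : N z ≤ 1 := gauge_le_one_of_mem hz

lemma N_sub_le (a b c : E) : N (a - c) ≤ N (a - b) + N (b - c) := by
  have : a - c = (a - b) + (b - c) := by abel
  rw [this]; exact N_add_le _ _

/-- Any closed convex set containing the generators contains `Bset`. -/
lemma Bset_subset {s : Set E} (hconv : Convex ℝ s) (hclosed : IsClosed s) (h : gens ⊆ s) :
    Bset ⊆ s := closure_minimal (convexHull_min h hconv) hclosed

/-- A continuous linear functional bounded by `c` on the generators is bounded by `c • N` everywhere. -/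
lemma clm_le_N (f : E →L[ℝ] ℝ) {c : ℝ} (hc : 0 ≤ c) (h : ∀ z ∈ gens, f z ≤ c) :
    ∀ z, |f z| ≤ c * N z := by
  have hB : ∀ z ∈ Bset, f z ≤ c := by
    intro z hz
    have hconv : Convex ℝ {w : E | f w ≤ c} := by
      have := (convex_Iic c).linear_preimage (f : E →ₗ[ℝ] ℝ)
      simpa [Set.preimage] using this
    exact Bset_subset hconv (isClosed_Iic.preimage f.continuous) h hz
  have key : ∀ z, f z ≤ c * N z := by
    intro z
    have step : ∀ ε : ℝ, 0 < ε → f z ≤ c * N z + ε := by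
      intro ε hε
      have hr : N z < N z + ε / (c + 1) := by
        have : 0 < ε / (c + 1) := by positivity
        linarith
      obtain ⟨b, hb0, hbr, hzb⟩ := exists_lt_of_gauge_lt Bset_absorbent hr
      obtain ⟨w, hw, rfl⟩ := hzb
      have : f (b • w) = b * f w := by simp
      rw [this]
      have h1 : f w ≤ c := hB w hw
      have h2 : b * f w ≤ b * c := by nlinarith
      have h3 : b * c ≤ (N (b • w) + ε / (c + 1)) * c := by
        have hb' : b < N (b • w) + ε / (c + 1) := hbr
        nlinarith
      have h4 : (N (b • w) + ε / (c + 1)) * c ≤ c * N (b • w) + ε := by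
        have : ε / (c + 1) * c ≤ ε := by
          rw [div_mul_eq_mul_div, div_le_iff₀ (by positivity)]
          nlinarith
        nlinarith [N_nonneg (b • w)]
      linarith
    by_contra hcon
    push_neg at hcon
    have := step ((f z - c * N z) / 2) (by linarith)
    linarith
  intro z
  rw [abs_le]
  constructor
  · have := key (-z)
    rw [map_neg, N_neg] at this
    linarith
  · exact key z

/-- The `k`-th coordinate functional. -/
def Pk (k : ℕ) : E →L[ℝ] ℝ :=
  LinearMap.mkContinuous
    { toFun := fun z => (z : ℕ → ℝ) k
      map_add' := fun a b => rfl
      map_smul' := fun c a => rfl } 1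
    (fun z => by rw [one_mul]; exact abs_apply_le_normE z k)

@[simp] lemma Pk_apply (k : ℕ) (z : E) : Pk k z = (z : ℕ → ℝ) k := rfl

lemma Pk_le_on_gens (k : ℕ) : ∀ z ∈ gens, Pk k z ≤ 1 + tk k := by
  rintro z ((h | ⟨j, rfl⟩) | ⟨j, rfl⟩)
  · have h1 : ‖z‖ ≤ 1 := by simpa [Metric.mem_closedBall, dist_eq_norm] using h
    have := abs_apply_le_normE z k
    have := (tk_pos k).le
    calc Pk k z ≤ |(z : ℕ → ℝ) k| := le_abs_self _
      _ ≤ 1 + tk k := by linarith [abs_apply_le_normE z k]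
  · rw [Pk_apply, vE_apply]
    by_cases h : k = j
    · subst h; simp
    · simp [h, (tk_pos k).le]
  · have : Pk k (-vE j) = -(1 + if k = j then tk j else 0) := by
      rw [map_neg, Pk_apply, vE_apply]
    rw [this]
    have := tk_pos k
    have := tk_pos j
    by_cases h : k = j <;> simp [h] <;> linarith

lemma abs_Pk_le (k : ℕ) (z : E) : |(z : ℕ → ℝ) k| ≤ (1 + tk k) * N z := by
  have := clm_le_N (Pk k) (by linarith [tk_pos k]) (Pk_le_on_gens k) z
  simpa using this

lemma norm_le_two_N (z : E) : ‖z‖ ≤ 2 * N z := by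
  apply normE_le z _ (by linarith [N_nonneg z])
  intro n
  calc |(z : ℕ → ℝ) n| ≤ (1 + tk n) * N z := abs_Pk_le n z
    _ ≤ 2 * N z := by nlinarith [tk_le_one n, tk_pos n, N_nonneg z]

lemma N_eq_zero_iff {z : E} : N z = 0 ↔ z = 0 := by
  constructor
  · intro h
    have := norm_le_two_N z
    rw [h] at this
    have : ‖z‖ = 0 := le_antisymm (by linarith) (norm_nonneg z)
    simpa using this
  · rintro rfl; exact N_zero

/-- A limit functional along a nonprincipal ultrafilter. -/
lemma exists_lam (z : E) : ∃ L, Filter.Tendsto (fun n => (z : ℕ → ℝ) n)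
    (Filter.hyperfilter ℕ : Ultrafilter ℕ) (nhds L) := by
  obtain ⟨L, _, hL⟩ := (isCompact_Icc (a := -‖z‖) (b := ‖z‖)).ultrafilter_le_nhds
    ((Filter.hyperfilter ℕ).map (fun n => (z : ℕ → ℝ) n))
    (by
      rw [le_principal_iff, Ultrafilter.mem_coe, Ultrafilter.mem_map]
      apply Filter.Eventually.filter_mono (le_refl _)
      apply Filter.Eventually.of_forall
      intro n
      have := abs_apply_le_normE z n
      rw [abs_le] at this
      exact ⟨this.1, this.2⟩)
  exact ⟨L, hL⟩

def lam (z : E) : ℝ := (exists_lam z).choose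

lemma lam_tendsto (z : E) : Filter.Tendsto (fun n => (z : ℕ → ℝ) n)
    (Filter.hyperfilter ℕ : Ultrafilter ℕ) (nhds (lam z)) := (exists_lam z).choose_spec

lemma lam_add (a b : E) : lam (a + b) = lam a + lam b := by
  have h1 := (lam_tendsto a).add (lam_tendsto b)
  have h2 := lam_tendsto (a + b)
  exact tendsto_nhds_unique
    (show Filter.Tendsto (fun n => (a : ℕ → ℝ) n + (b : ℕ → ℝ) n) _ _ from h2) h1

lemma lam_smul (c : ℝ) (a : E) : lam (c • a) = c * lam a := by
  have h1 := (lam_tendsto a).const_mul c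
  have h2 := lam_tendsto (c • a)
  exact tendsto_nhds_unique
    (show Filter.Tendsto (fun n => c * (a : ℕ → ℝ) n) _ _ from h2) h1

lemma abs_lam_le (z : E) : |lam z| ≤ ‖z‖ := by
  have h1 := (lam_tendsto z).abs
  apply le_of_tendsto h1
  apply Filter.Eventually.of_forall
  intro n
  exact abs_apply_le_normE z n

lemma lam_oneE : lam oneE = 1 := by
  have h2 := lam_tendsto oneE
  have h3 : (fun n => (oneE : ℕ → ℝ) n) = fun _ => (1 : ℝ) := rfl
  rw [h3] at h2
  exact tendsto_nhds_unique h2 tendsto_const_nhds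

lemma lam_eE (k : ℕ) : lam (eE k) = 0 := by
  have h2 := lam_tendsto (eE k)
  have h3 : ∀ᶠ n in (Filter.hyperfilter ℕ : Ultrafilter ℕ), (eE k : ℕ → ℝ) n = 0 := by
    apply Filter.Eventually.filter_mono (Filter.hyperfilter_le_cofinite)
    rw [Filter.eventually_cofinite]
    apply Set.Finite.subset (Set.finite_singleton k)
    intro n hn
    simp only [Set.mem_setOf_eq] at hn
    by_contra hne
    exact hn (eE_apply_ne k (by simpa using hne))
  have h4 := Filter.Tendsto.congr' h3 h2
  exact tendsto_nhds_unique h4 tendsto_const_nhds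

def lamL : E →L[ℝ] ℝ :=
  LinearMap.mkContinuous
    { toFun := lam
      map_add' := lam_add
      map_smul' := lam_smul } 1
    (fun z => by simpa using abs_lam_le z)

@[simp] lemma lamL_apply (z : E) : lamL z = lam z := rfl

def Y : Type := E

instance : AddCommGroup Y := inferInstanceAs (AddCommGroup E)
instance : Module ℝ Y := inferInstanceAs (Module ℝ E)

def toE (y : Y) : E := y
def ofE (z : E) : Y := z

@[simp] lemma toE_ofE (z : E) : toE (ofE z) = z := rfl
@[simp] lemma ofE_toE (y : Y) : ofE (toE y) = y := rfl
lemma toE_add (a b : Y) : toE (a + b) = toE a + toE b := rfl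
lemma toE_sub (a b : Y) : toE (a - b) = toE a - toE b := rfl
lemma toE_neg (a : Y) : toE (-a) = -toE a := rfl
lemma toE_smul (c : ℝ) (a : Y) : toE (c • a) = c • toE a := rfl
lemma toE_zero : toE 0 = 0 := rfl

instance YNormed : NormedAddCommGroup Y :=
  AddGroupNorm.toNormedAddCommGroup
    { toFun := fun y => N (toE y)
      map_zero' := N_zero
      add_le' := fun a b => N_add_le (toE a) (toE b)
      neg' := fun a => N_neg (toE a)
      eq_zero_of_map_eq_zero' := fun y h => N_eq_zero_iff.1 h }

lemma norm_Y (y : Y) : ‖y‖ = N (toE y) := rfl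

instance : NormedSpace ℝ Y where
  norm_smul_le a y := by
    rw [norm_Y, norm_Y, toE_smul, N_smul]
    simp [Real.norm_eq_abs]

lemma dist_Y (a b : Y) : dist a b = N (toE a - toE b) := by
  rw [dist_eq_norm, norm_Y, toE_sub]

instance : CompleteSpace Y := by
  apply Metric.complete_of_cauchySeq_tendsto
  intro u hu
  have hE : CauchySeq (fun n => toE (u n)) := by
    rw [Metric.cauchySeq_iff] at hu ⊢
    intro ε hε
    obtain ⟨M, hM⟩ := hu (ε / 2) (by linarith)
    refine ⟨M, fun m hm n hn => ?_⟩
    have h1 := hM m hm n hn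
    rw [dist_Y] at h1
    rw [dist_eq_norm]
    calc ‖toE (u m) - toE (u n)‖ ≤ 2 * N (toE (u m) - toE (u n)) := norm_le_two_N _
      _ < ε := by linarith
  obtain ⟨L, hL⟩ := cauchySeq_tendsto_of_complete hE
  refine ⟨ofE L, ?_⟩
  rw [Metric.tendsto_atTop] at hL ⊢
  intro ε hε
  obtain ⟨M, hM⟩ := hL ε hε
  refine ⟨M, fun n hn => ?_⟩
  have h1 := hM n hn
  rw [dist_eq_norm] at h1
  rw [dist_Y, toE_ofE]
  exact lt_of_le_of_lt (N_le_norm _) h1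

/-- Transfer a continuous functional from `E` to `Y`. -/
def fY (f : E →L[ℝ] ℝ) : Y →L[ℝ] ℝ :=
  LinearMap.mkContinuous
    { toFun := fun y => f (toE y)
      map_add' := fun a b => by show f (toE a + toE b) = _; rw [map_add]
      map_smul' := fun c a => by show f (c • toE a) = _; rw [map_smul]; rfl }
    (2 * ‖f‖)
    (fun y => by
      calc ‖f (toE y)‖ ≤ ‖f‖ * ‖toE y‖ := f.le_opNorm _
        _ ≤ ‖f‖ * (2 * N (toE y)) := by
            have := norm_le_two_N (toE y)
            nlinarith [norm_nonneg f, N_nonneg (toE y)]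
        _ = 2 * ‖f‖ * ‖y‖ := by rw [norm_Y]; ring)

@[simp] lemma fY_apply (f : E →L[ℝ] ℝ) (y : Y) : fY f y = f (toE y) := rfl

lemma opNorm_fY_le (f : E →L[ℝ] ℝ) {c : ℝ} (hc : 0 ≤ c) (h : ∀ z ∈ gens, f z ≤ c) :
    ‖fY f‖ ≤ c := by
  apply ContinuousLinearMap.opNorm_le_bound _ hc
  intro y
  rw [norm_Y, fY_apply]
  have := clm_le_N f hc h (toE y)
  calc ‖f (toE y)‖ = |f (toE y)| := rfl
    _ ≤ c * N (toE y) := this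

lemma opNorm_fY_eq_one (f : E →L[ℝ] ℝ) (h : ∀ z ∈ gens, f z ≤ 1)
    {w : E} (hw : w ∈ Bset) (hfw : f w = 1) : ‖fY f‖ = 1 := by
  refine le_antisymm (opNorm_fY_le f zero_le_one h) ?_
  have h1 : ‖(ofE w : Y)‖ ≤ 1 := by rw [norm_Y, toE_ofE]; exact N_le_one_of_mem hw
  have h2 := (fY f).unit_le_opNorm (ofE w) h1
  rw [fY_apply, toE_ofE, hfw] at h2
  simpa using h2

lemma norm_oneE_le : ‖oneE‖ ≤ 1 := normE_le _ 1 zero_le_one (fun n => by norm_num)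

lemma oneE_mem_Bset : oneE ∈ Bset := norm_le_one_mem_Bset norm_oneE_le

lemma lam_neg (z : E) : lam (-z) = -lam z := by
  have := lam_smul (-1) z
  simpa using this

lemma lam_vE (k : ℕ) : lam (vE k) = 1 := by
  rw [vE, lam_add, lam_smul, lam_oneE, lam_eE]; ring

lemma lamL_on_gens : ∀ z ∈ gens, lamL z ≤ 1 := by
  rintro z ((h | ⟨k, rfl⟩) | ⟨k, rfl⟩)
  · have h1 : ‖z‖ ≤ 1 := by simpa [Metric.mem_closedBall, dist_eq_norm] using h
    calc lamL z ≤ |lam z| := le_abs_self _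
      _ ≤ ‖z‖ := abs_lam_le z
      _ ≤ 1 := h1
  · rw [lamL_apply, lam_vE]
  · rw [map_neg, lamL_apply, lam_vE]; norm_num

lemma norm_fY_lamL : ‖fY lamL‖ = 1 :=
  opNorm_fY_eq_one lamL lamL_on_gens oneE_mem_Bset (by rw [lamL_apply, lam_oneE])

/-- The distinguished point. -/
def xY : Y := ofE oneE

lemma norm_xY : ‖xY‖ = 1 := by
  refine le_antisymm ?_ ?_
  · rw [norm_Y]; exact N_le_one_of_mem oneE_mem_Bset
  · have h := (fY lamL).unit_le_opNorm xY
    have h1 : fY lamL xY = 1 := by rw [fY_apply]; exact lam_oneE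
    by_contra hc
    push_neg at hc
    have h2 := (fY lamL).le_opNorm xY
    rw [h1, norm_fY_lamL] at h2
    simp only [norm_one, one_mul] at h2
    linarith

lemma N_eE_le (k : ℕ) : N (eE k) ≤ 1 := by
  refine le_trans (N_le_norm _) (normE_le _ 1 zero_le_one fun n => ?_)
  by_cases h : n = k
  · subst h; rw [eE_apply_self]; norm_num
  · rw [eE_apply_ne _ h]; norm_num

lemma N_oneE_sub_vE (k : ℕ) : N (oneE - vE k) ≤ tk k := by
  have : oneE - vE k = -(tk k • eE k) := by rw [vE]; abel
  rw [this, N_neg, N_smul, abs_of_pos (tk_pos k)]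
  nlinarith [N_eE_le k, tk_pos k]

lemma oneE_sub_two_eE_mem (k : ℕ) : oneE - (2 : ℝ) • eE k ∈ Bset := by
  apply norm_le_one_mem_Bset
  apply normE_le _ 1 zero_le_one
  intro n
  have : ((oneE - (2:ℝ) • eE k : E) : ℕ → ℝ) n = 1 - 2 * (eE k : ℕ → ℝ) n := rfl
  rw [this]
  by_cases h : n = k
  · subst h; rw [eE_apply_self]; norm_num
  · rw [eE_apply_ne _ h]; norm_num

lemma N_two_eE_ge (k : ℕ) : 2 - 2 * tk k ≤ N ((2 : ℝ) • eE k) := by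
  have h1 := abs_Pk_le k ((2:ℝ) • eE k)
  have h2 : (((2:ℝ) • eE k : E) : ℕ → ℝ) k = 2 := by
    have : (((2:ℝ) • eE k : E) : ℕ → ℝ) k = 2 * (eE k : ℕ → ℝ) k := rfl
    rw [this, eE_apply_self]; norm_num
  rw [h2] at h1
  have h3 : |(2:ℝ)| = 2 := by norm_num
  rw [h3] at h1
  have htk := tk_pos k
  have htk1 := tk_le_one k
  have hN := N_nonneg ((2:ℝ) • eE k)
  nlinarith

/-- The exposing functionals for the spike points. -/
def fm (m : ℕ) : E →L[ℝ] ℝ := (2 + tk m)⁻¹ • (Pk m + lamL)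

lemma fm_apply (m : ℕ) (z : E) : fm m z = (2 + tk m)⁻¹ * ((z : ℕ → ℝ) m + lam z) := rfl

lemma fm_vE_self (m : ℕ) : fm m (vE m) = 1 := by
  rw [fm_apply, vE_apply, lam_vE, if_pos rfl]
  rw [show (1 : ℝ) + tk m + 1 = 2 + tk m by ring]
  exact inv_mul_cancel₀ (by have := tk_pos m; linarith)

lemma fm_le_on_gens (m : ℕ) : ∀ z ∈ gens, fm m z ≤ 1 := by
  intro z hz
  have htk := tk_pos m
  have hinv : (0:ℝ) < (2 + tk m)⁻¹ := by positivity
  rw [fm_apply]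
  rw [inv_mul_le_iff₀ (by linarith), mul_one]
  rcases hz with ((h | ⟨k, rfl⟩) | ⟨k, rfl⟩)
  · have h1 : ‖z‖ ≤ 1 := by simpa [Metric.mem_closedBall, dist_eq_norm] using h
    have h2 := abs_apply_le_normE z m
    have h3 := abs_lam_le z
    have h4 := abs_le.1 h2
    have h5 := abs_le.1 h3
    linarith [h4.2, h5.2]
  · rw [vE_apply, lam_vE]
    by_cases h : m = k
    · subst h; rw [if_pos rfl]; linarith
    · rw [if_neg h]; linarith
  · have hv : ((-vE k : E) : ℕ → ℝ) m = -((vE k : E) : ℕ → ℝ) m := rfl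
    rw [hv, vE_apply, lam_neg]
    rw [lam_vE]
    have := tk_pos k
    by_cases h : m = k <;> simp [h] <;> linarith

lemma gm_pos (m : ℕ) : 0 < tk m / (2 + tk m) := by
  have := tk_pos m; positivity

lemma two_div_eq (m : ℕ) : 2 / (2 + tk m) = 1 - tk m / (2 + tk m) := by
  have := tk_pos m
  field_simp
  ring

/-- On generators other than `vE m`, `fm m` stays below `1 - gm`. -/
lemma fm_gap (m : ℕ) : ∀ z ∈ gens, z = vE m ∨ fm m z ≤ 1 - tk m / (2 + tk m) := by
  intro z hz
  have htk := tk_pos m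
  have h2t : (0:ℝ) < 2 + tk m := by linarith
  have key : ((z : ℕ → ℝ) m + lam z ≤ 2) → fm m z ≤ 1 - tk m / (2 + tk m) := by
    intro hb
    have hinv : (0:ℝ) ≤ (2 + tk m)⁻¹ := by positivity
    calc fm m z = (2 + tk m)⁻¹ * ((z : ℕ → ℝ) m + lam z) := fm_apply m z
      _ ≤ (2 + tk m)⁻¹ * 2 := mul_le_mul_of_nonneg_left hb hinv
      _ = 2 / (2 + tk m) := by rw [div_eq_mul_inv]; ring
      _ = 1 - tk m / (2 + tk m) := two_div_eq m
  rcases hz with ((h | ⟨k, rfl⟩) | ⟨k, rfl⟩)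
  · refine Or.inr (key ?_)
    have h1 : ‖z‖ ≤ 1 := by simpa [Metric.mem_closedBall, dist_eq_norm] using h
    have h4 := abs_le.1 (abs_apply_le_normE z m)
    have h5 := abs_le.1 (abs_lam_le z)
    linarith [h4.2, h5.2]
  · by_cases h : k = m
    · exact Or.inl (by rw [h])
    · refine Or.inr (key ?_)
      rw [vE_apply, lam_vE]
      have hmk : m ≠ k := fun hh => h hh.symm
      rw [if_neg hmk]
      norm_num
  · refine Or.inr (key ?_)
    have hv : ((-vE k : E) : ℕ → ℝ) m = -((vE k : E) : ℕ → ℝ) m := rfl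
    rw [hv, vE_apply, lam_neg, lam_vE]
    have := tk_pos k
    by_cases h : m = k <;> simp [h] <;> linarith

lemma continuous_N : Continuous N := by
  have : LipschitzWith 1 N := by
    apply LipschitzWith.of_dist_le_mul
    intro a b
    rw [Real.dist_eq, dist_eq_norm, NNReal.coe_one, one_mul, abs_le]
    constructor
    · have h1 : N b ≤ N a + N (b - a) := by
        have := N_add_le a (b - a); simpa using this
      have h2 : N (b - a) ≤ ‖b - a‖ := N_le_norm _
      rw [← norm_neg, neg_sub] at h2
      linarith
    · have h1 : N a ≤ N b + N (a - b) := by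
        have := N_add_le b (a - b); simpa using this
      linarith [N_le_norm (a - b)]
  exact this.continuous

def gm (m : ℕ) : ℝ := tk m / (2 + tk m)

lemma gm_pos' (m : ℕ) : 0 < gm m := gm_pos m

lemma gm_le_one (m : ℕ) : gm m ≤ 1 := by
  rw [gm, div_le_one (by have := tk_pos m; linarith)]
  have := tk_pos m; linarith

/-- The key strong exposedness estimate: on the new unit ball, proximity of `fm m z` to 1
forces `z` to be close to the spike `vE m`. -/
lemma slice_close (m : ℕ) : ∀ z ∈ Bset, N (z - vE m) ≤ (2 / gm m) * (1 - fm m z) := by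
  set g := gm m with hg
  have hg0 : 0 < g := gm_pos' m
  have hg1 : g ≤ 1 := gm_le_one m
  set F : E → ℝ := fun z => N (z - vE m) + (2 / g) * fm m z - 2 / g with hF
  suffices h : ∀ z ∈ Bset, F z ≤ 0 by
    intro z hz
    have := h z hz
    rw [hF] at this
    simp only at this
    have : N (z - vE m) ≤ 2 / g - (2 / g) * fm m z := by linarith
    calc N (z - vE m) ≤ 2 / g - (2 / g) * fm m z := this
      _ = (2 / g) * (1 - fm m z) := by ring
  have hconv : ConvexOn ℝ Set.univ F := by
    refine ⟨convex_univ, ?_⟩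
    intro a _ b _ la lb hla hlb hab
    have hNpart : N (la • a + lb • b - vE m) ≤ la * N (a - vE m) + lb * N (b - vE m) := by
      have hrw : la • a + lb • b - vE m = la • (a - vE m) + lb • (b - vE m) := by
        conv_lhs => rw [show vE m = (la + lb) • vE m by rw [hab, one_smul]]
        rw [smul_sub, smul_sub, add_smul]
        abel
      rw [hrw]
      calc N (la • (a - vE m) + lb • (b - vE m))
          ≤ N (la • (a - vE m)) + N (lb • (b - vE m)) := N_add_le _ _
        _ = la * N (a - vE m) + lb * N (b - vE m) := by
            rw [N_smul, N_smul, abs_of_nonneg hla, abs_of_nonneg hlb]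
    have hlin : fm m (la • a + lb • b) = la * fm m a + lb * fm m b := by
      rw [map_add, map_smul, map_smul]; rfl
    have hc : la * (2 / g) + lb * (2 / g) = 2 / g := by rw [← add_mul, hab, one_mul]
    simp only [smul_eq_mul, hF]
    rw [hlin]
    nlinarith [hNpart, hc]
  have hgens : ∀ p ∈ gens, F p ≤ 0 := by
    intro p hp
    rcases fm_gap m p hp with rfl | hle
    · simp only [hF, sub_self, N_zero, fm_vE_self]
      ring_nf
      simp
    · have h1 : N (p - vE m) ≤ 2 := by
        have ha := N_le_one_of_mem (gens_subset_Bset hp)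
        have hb := N_le_one_of_mem (gens_subset_Bset (vE_mem_gens m))
        calc N (p - vE m) ≤ N p + N (-vE m) := by
              have := N_add_le p (-vE m); simpa [sub_eq_add_neg] using this
          _ ≤ 2 := by rw [N_neg]; linarith
      simp only [hF]
      have h2 : (2 / g) * fm m p ≤ (2 / g) * (1 - g) := by
        apply mul_le_mul_of_nonneg_left _ (by positivity)
        rw [hg]; exact hle
      have h3 : (2 / g) * (1 - g) = 2 / g - 2 := by
        field_simp
      linarith
  have hcont : Continuous F := by
    apply Continuous.sub
    · apply Continuous.add
      · exact continuous_N.comp (continuous_id.sub continuous_const)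
      · exact continuous_const.mul (fm m).continuous
    · exact continuous_const
  have hhull : convexHull ℝ gens ⊆ {w : E | F w ≤ 0} := by
    intro z hz
    obtain ⟨p, hp, hle⟩ := hconv.exists_ge_of_mem_convexHull (Set.subset_univ gens) hz
    exact le_trans hle (hgens p hp)
  intro z hz
  exact closure_minimal hhull (isClosed_le hcont continuous_const) hz

lemma mem_Bset_of_N_le_one {z : E} (h : N z ≤ 1) : z ∈ Bset := by
  have key : ∀ n : ℕ, (1 + 1/(n+1) : ℝ)⁻¹ • z ∈ Bset := by
    intro n
    have hpos : (0:ℝ) < 1 + 1/(n+1) := by positivity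
    have hlt : N z < 1 + 1/(n+1) := lt_of_le_of_lt h (by
      have : (0:ℝ) < 1/(n+1) := by positivity
      linarith)
    obtain ⟨b, hb0, hblt, w, hw, rfl⟩ := exists_lt_of_gauge_lt Bset_absorbent hlt
    have hc0 : 0 ≤ b / (1 + 1/(n+1)) := by positivity
    have hc1 : b / (1 + 1/(n+1)) ≤ 1 := by
      rw [div_le_one hpos]; linarith
    have : (1 + 1/(n+1) : ℝ)⁻¹ • b • w = (b / (1 + 1/(n+1))) • w + (1 - b / (1 + 1/(n+1))) • 0 := by
      rw [smul_zero, add_zero, smul_smul]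
      congr 1
      field_simp
      try ring
    rw [this]
    exact Bset_convex hw zero_mem_Bset hc0 (by linarith) (by ring)
  have hlim : Filter.Tendsto (fun n : ℕ => (1 + 1/(n+1) : ℝ)⁻¹ • z) Filter.atTop (nhds z) := by
    have h1 : Filter.Tendsto (fun n : ℕ => (1 + 1/(n+1) : ℝ)⁻¹) Filter.atTop (nhds 1) := by
      have h2 : Filter.Tendsto (fun n : ℕ => (1 + 1/(n+1) : ℝ)) Filter.atTop (nhds 1) := by
        have h3 : Filter.Tendsto (fun n : ℕ => (1/(n+1) : ℝ)) Filter.atTop (nhds 0) :=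
          tendsto_one_div_add_atTop_nhds_zero_nat
        have := h3.const_add 1
        simpa using this
      have := h2.inv₀ (by norm_num)
      simpa using this
    have := h1.smul_const z
    simpa using this
  exact Bset_closed.mem_of_tendsto hlim (Filter.Eventually.of_forall key)

def toELM : Y →ₗ[ℝ] E :=
  { toFun := toE, map_add' := fun _ _ => rfl, map_smul' := fun _ _ => rfl }

def eY (k : ℕ) : Y := ofE (eE k)

lemma sign_sum_norm_le (F : Finset ℕ) (ε : ℕ → ℝ) (hε : ∀ k, ε k = 1 ∨ ε k = -1) :
    ‖(∑ k ∈ F, ε k • eY k : Y)‖ ≤ 1 := by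
  have htoE : toE (∑ k ∈ F, ε k • eY k) = ∑ k ∈ F, ε k • eE k := by
    have := map_sum toELM (fun k => ε k • eY k) F
    rw [show toE (∑ k ∈ F, ε k • eY k) = toELM (∑ k ∈ F, ε k • eY k) from rfl, this]
    rfl
  rw [norm_Y, htoE]
  refine le_trans (N_le_norm _) (normE_le _ 1 zero_le_one fun n => ?_)
  have hcoe : ((∑ k ∈ F, ε k • eE k : E) : ℕ → ℝ) n = ∑ k ∈ F, ε k * (eE k : ℕ → ℝ) n := by
    rw [lp.coeFn_sum]
    rw [Finset.sum_apply]
    rfl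
  rw [hcoe]
  have hterm : ∀ k ∈ F, ε k * (eE k : ℕ → ℝ) n = if k = n then ε n else 0 := by
    intro k _
    by_cases h : k = n
    · subst h; rw [eE_apply_self, if_pos rfl, mul_one]
    · rw [eE_apply_ne _ (fun hh => h hh.symm), if_neg h, mul_zero]
  rw [Finset.sum_congr rfl hterm, Finset.sum_ite_eq' F n (fun _ => ε n)]
  by_cases h : n ∈ F
  · rw [if_pos h]; rcases hε n with h1 | h1 <;> rw [h1] <;> norm_num
  · rw [if_neg h]; norm_num

lemma coeff_small (f : Y →L[ℝ] ℝ) (hf : ‖f‖ = 1) (θ : ℝ) (hθ : 0 < θ) (K : ℕ) :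
    ∃ k, K ≤ k ∧ |f (eY k)| < θ := by
  by_contra hcon
  push_neg at hcon
  obtain ⟨n, hn⟩ := exists_nat_gt (1 / θ)
  have hn' : 1 < (n : ℝ) * θ := by
    rw [div_lt_iff₀ hθ] at hn
    linarith
  set F := Finset.Ico K (K + n) with hF
  set ε : ℕ → ℝ := fun k => if f (eY k) < 0 then -1 else 1 with hεdef
  have hε : ∀ k, ε k = 1 ∨ ε k = -1 := by
    intro k; by_cases h : f (eY k) < 0 <;> simp [hεdef, h]
  have habs : ∀ k, ε k * f (eY k) = |f (eY k)| := by
    intro k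
    by_cases h : f (eY k) < 0
    · rw [hεdef]; simp only [if_pos h]; rw [abs_of_neg h]; ring
    · rw [hεdef]; simp only [if_neg h]; rw [abs_of_nonneg (not_lt.1 h)]; ring
  have hsum : f (∑ k ∈ F, ε k • eY k) = ∑ k ∈ F, |f (eY k)| := by
    rw [map_sum]
    refine Finset.sum_congr rfl fun k _ => ?_
    rw [map_smul]
    simpa using habs k
  have hb : f (∑ k ∈ F, ε k • eY k) ≤ 1 := by
    calc f (∑ k ∈ F, ε k • eY k) ≤ ‖f (∑ k ∈ F, ε k • eY k)‖ := le_abs_self _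
      _ ≤ ‖f‖ * ‖(∑ k ∈ F, ε k • eY k : Y)‖ := f.le_opNorm _
      _ ≤ 1 * 1 := by
          rw [hf]
          exact mul_le_mul_of_nonneg_left (sign_sum_norm_le F ε hε) zero_le_one
      _ = 1 := by norm_num
  have hlow : (n : ℝ) * θ ≤ ∑ k ∈ F, |f (eY k)| := by
    have hcard : F.card = n := by rw [hF, Nat.card_Ico]; omega
    calc (n : ℝ) * θ = ∑ _k ∈ F, θ := by rw [Finset.sum_const, hcard, nsmul_eq_mul]
      _ ≤ ∑ k ∈ F, |f (eY k)| := by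
          refine Finset.sum_le_sum fun k hk => ?_
          rw [hF, Finset.mem_Ico] at hk
          exact hcon k hk.1
  rw [hsum] at hb
  linarith

lemma tk_mono {K k : ℕ} (h : K ≤ k) : tk k ≤ tk K := by
  rw [tk, tk]
  apply one_div_le_one_div_of_le (by positivity)
  have : (K : ℝ) ≤ k := Nat.cast_le.2 h
  linarith

lemma xY_mem_slice_iff (f : Y →L[ℝ] ℝ) (δ : ℝ) :
    xY ∈ unitBallSlice f δ ↔ ‖xY‖ ≤ 1 ∧ 1 - δ < f xY := Iff.rfl

/-- Every slice of the new ball containing `xY` has points almost at distance 2 from it. -/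
lemma deltaSlice_sup (f : Y →L[ℝ] ℝ) (hf : ‖f‖ = 1) {δ : ℝ} (hδ : 0 < δ)
    (hx : xY ∈ unitBallSlice f δ) :
    sSup ((fun y => ‖xY - y‖) '' unitBallSlice f δ) = 2 := by
  obtain ⟨hx1, hx2⟩ := hx
  have hbdd : ∀ r ∈ (fun y => ‖xY - y‖) '' unitBallSlice f δ, r ≤ 2 := by
    rintro r ⟨y, hy, rfl⟩
    calc ‖xY - y‖ ≤ ‖xY‖ + ‖y‖ := norm_sub_le _ _
      _ ≤ 2 := by rw [norm_xY]; linarith [hy.1]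
  refine le_antisymm (Real.sSup_le hbdd (by norm_num)) ?_
  by_contra hcon
  push_neg at hcon
  set S := sSup ((fun y => ‖xY - y‖) '' unitBallSlice f δ) with hS
  set ε : ℝ := 2 - S with hε
  have hεpos : 0 < ε := by rw [hε]; linarith
  set θ : ℝ := (f xY - (1 - δ)) / 2 with hθdef
  have hθ : 0 < θ := by rw [hθdef]; linarith
  obtain ⟨K, hK⟩ := exists_nat_gt (2 / ε)
  have hKpos : (0:ℝ) < K + 1 := by positivity
  have htkK : tk K < ε / 2 := by
    rw [tk, div_lt_iff₀ hKpos]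
    rw [div_lt_iff₀ hεpos] at hK
    have h2 : 0 < ε / 2 := by linarith
    nlinarith
  obtain ⟨k, hk1, hk2⟩ := coeff_small f hf θ hθ K
  have htkk : tk k < ε / 2 := lt_of_le_of_lt (tk_mono hk1) htkK
  set y : Y := xY - (2:ℝ) • eY k with hy
  have htoEy : toE y = oneE - (2:ℝ) • eE k := rfl
  have hymem : y ∈ unitBallSlice f δ := by
    constructor
    · rw [norm_Y, htoEy]
      exact N_le_one_of_mem (oneE_sub_two_eE_mem k)
    · have h1 : f y = f xY - 2 * f (eY k) := by
        rw [hy, map_sub, map_smul]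
        simp only [smul_eq_mul]
      have h2 := abs_lt.1 hk2
      rw [h1, hθdef] at *
      linarith [h2.2]
  have hdist : ‖xY - y‖ > S := by
    have h1 : xY - y = (2:ℝ) • eY k := by rw [hy]; abel
    have h2 : ‖xY - y‖ = N ((2:ℝ) • eE k) := by rw [h1, norm_Y]; rfl
    rw [h2]
    have h3 := N_two_eE_ge k
    linarith
  have hbd : BddAbove ((fun y => ‖xY - y‖) '' unitBallSlice f δ) :=
    ⟨2, fun r hr => hbdd r hr⟩
  have : ‖xY - y‖ ≤ S := le_csSup hbd ⟨y, hymem, rfl⟩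
  linarith

/-- The tiny slices determined by the exposing functionals. -/
lemma dcSlice_bound (m : ℕ) :
    sSup ((fun y => ‖xY - y‖) '' unitBallSlice (fY (fm m)) (gm m * tk m)) ≤ 3 * tk m := by
  apply Real.sSup_le
  · rintro r ⟨y, hy, rfl⟩
    obtain ⟨hy1, hy2⟩ := hy
    have hz : toE y ∈ Bset := mem_Bset_of_N_le_one (by rw [norm_Y] at hy1; exact hy1)
    have hfz : 1 - fm m (toE y) < gm m * tk m := by
      have : fY (fm m) y = fm m (toE y) := rfl
      rw [this] at hy2
      linarith
    have hkey := slice_close m (toE y) hz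
    have hgm := gm_pos' m
    have htk := tk_pos m
    have h2 : N (toE y - vE m) ≤ (2 / gm m) * (gm m * tk m) := by
      apply le_trans hkey
      apply mul_le_mul_of_nonneg_left (le_of_lt hfz) (by positivity)
    have h3 : (2 / gm m) * (gm m * tk m) = 2 * tk m := by
      field_simp
    rw [h3] at h2
    have h4 : ‖xY - y‖ = N (oneE - toE y) := rfl
    show ‖xY - y‖ ≤ 3 * tk m
    rw [h4]
    calc N (oneE - toE y) ≤ N (oneE - vE m) + N (vE m - toE y) := N_sub_le _ _ _
      _ ≤ tk m + N (toE y - vE m) := by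
          rw [show vE m - toE y = -(toE y - vE m) by abel, N_neg]
          linarith [N_oneE_sub_vE m]
      _ ≤ 3 * tk m := by linarith
  · have := tk_pos m; linarith

lemma norm_fY_fm (m : ℕ) : ‖fY (fm m)‖ = 1 :=
  opNorm_fY_eq_one (fm m) (fm_le_on_gens m) (gens_subset_Bset (vE_mem_gens m)) (fm_vE_self m)

theorem main : ‖xY‖ = 1 ∧ DeltaC xY = 2 ∧ Dc xY = 0 := by
  refine ⟨norm_xY, ?_, ?_⟩
  · -- DeltaC = 2
    have hset : {r | ∃ (f : Y →L[ℝ] ℝ) (δ : ℝ), ‖f‖ = 1 ∧ 0 < δ ∧ xY ∈ unitBallSlice f δ ∧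
        r = sSup ((fun y => ‖xY - y‖) '' unitBallSlice f δ)} = {2} := by
      apply Set.eq_singleton_iff_unique_mem.2
      constructor
      · refine ⟨fY lamL, 1, norm_fY_lamL, one_pos, ⟨norm_xY.le, ?_⟩, ?_⟩
        · have : fY lamL xY = 1 := by rw [fY_apply]; exact lam_oneE
          rw [this]; norm_num
        · rw [deltaSlice_sup (fY lamL) norm_fY_lamL one_pos]
          exact ⟨norm_xY.le, by
            have : fY lamL xY = 1 := by rw [fY_apply]; exact lam_oneE
            rw [this]; norm_num⟩
      · rintro r ⟨f, δ, hf, hδ, hx, rfl⟩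
        exact deltaSlice_sup f hf hδ hx
    rw [DeltaC, hset, csInf_singleton]
  · -- Dc = 0
    set S := {r | ∃ (f : Y →L[ℝ] ℝ) (δ : ℝ), ‖f‖ = 1 ∧ 0 < δ ∧
        r = sSup ((fun y => ‖xY - y‖) '' unitBallSlice f δ)} with hSdef
    have hnonneg : ∀ r ∈ S, 0 ≤ r := by
      rintro r ⟨f, δ, hf, hδ, rfl⟩
      apply Real.sSup_nonneg
      rintro w ⟨y, _, rfl⟩
      exact norm_nonneg _
    have hmem : ∀ m : ℕ, sSup ((fun y => ‖xY - y‖) ''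
        unitBallSlice (fY (fm m)) (gm m * tk m)) ∈ S := by
      intro m
      exact ⟨fY (fm m), gm m * tk m, norm_fY_fm m,
        mul_pos (gm_pos' m) (tk_pos m), rfl⟩
    rw [Dc, ← hSdef]
    refine le_antisymm ?_ (le_csInf ⟨_, hmem 0⟩ hnonneg)
    by_contra hcon
    push_neg at hcon
    obtain ⟨m, hm⟩ := exists_nat_gt (3 / sInf S)
    have hIpos : 0 < sInf S := hcon
    have hmpos : (0:ℝ) < m + 1 := by positivity
    have h1 : 3 * tk m < sInf S := by
      rw [tk]
      rw [div_lt_iff₀ hIpos] at hm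
      rw [show (3:ℝ) * (1 / (m+1)) = 3 / (m+1) by ring, div_lt_iff₀ hmpos]
      nlinarith
    have h2 : sInf S ≤ 3 * tk m :=
      le_trans (csInf_le ⟨0, hnonneg⟩ (hmem m)) (dcSlice_bound m)
    linarith

end DPoint

/-- There exist a real Banach space and a unit-sphere point whose Δ-constant is 2 while its
Daugavet constant is 0. -/
theorem exists_deltaPoint_with_daugavetConstant_zero :
    ∃ (Y : Type) (_ : NormedAddCommGroup Y) (_ : NormedSpace ℝ Y) (_ : CompleteSpace Y)
      (x : Y), ‖x‖ = 1 ∧ DeltaC x = 2 ∧ Dc x = 0 :=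
  ⟨DPoint.Y, inferInstance, inferInstance, inferInstance, DPoint.xY, DPoint.main⟩
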